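/- Let L_{l,m} = [[q²/u - ub, -p*q/u],[P*q/u, -P*p/u]] and M_{l,m} = [[Q*q/u, -p*Q/u],[p*q/u, ut - p²/u]] with p² = a - g, P² = A - g, q² = B - g, Q² = B' - g. Then the compatibility L_{l,m+1}·M_{l,m} = M_{l+1,m}·L_{l,m} (i.e., replacing u→ut, ub→ubt, q→Q in L, and u→ub, p→P in M) holds for all values of the spectral parameter g if and only if ubt - u = (B' - a)/ut - (B - A)/ub. -/

import Mathlib

open Matrix

/-- The compatibility condition of the Lax pair (B.2b), holding for all values
of the spectral parameter `g`, is equivalent to Hirota's discrete KdV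
equation. -/
theorem Lax_dKdV_CAC1
    (u ub ut ubt a A B B' : ℂ)
    (hu : u ≠ 0) (hub : ub ≠ 0) (hut : ut ≠ 0) (hubt : ubt ≠ 0) :
    (∀ g p P q Q : ℂ, p ^ 2 = a - g → P ^ 2 = A - g → q ^ 2 = B - g → Q ^ 2 = B' - g →
      !![Q ^ 2 / ut - ubt, -(p * Q) / ut; P * Q / ut, -(P * p) / ut] *
        !![Q * q / u, -(p * Q) / u; p * q / u, ut - p ^ 2 / u] =
      !![Q * q / ub, -(P * Q) / ub; P * q / ub, ubt - P ^ 2 / ub] *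
        !![q ^ 2 / u - ub, -(p * q) / u; P * q / u, -(P * p) / u]) ↔
    ubt - u = (B' - a) / ut - (B - A) / ub := by
  constructor
  · intro H
    obtain ⟨g, hgB, hgB'⟩ : ∃ g : ℂ, B - g ≠ 0 ∧ B' - g ≠ 0 := by
      by_cases hBB : B + 1 = B'
      · refine ⟨B + 2, by ring_nf; norm_num, ?_⟩
        have : B' - (B + 2) = -1 := by rw [← hBB]; ring
        simp [this]
      · exact ⟨B + 1, by ring_nf; norm_num, sub_ne_zero.mpr (Ne.symm hBB)⟩
    obtain ⟨p, hp⟩ := IsAlgClosed.exists_pow_nat_eq (a - g) (n := 2) (by norm_num)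
    obtain ⟨P, hP⟩ := IsAlgClosed.exists_pow_nat_eq (A - g) (n := 2) (by norm_num)
    obtain ⟨q, hq⟩ := IsAlgClosed.exists_pow_nat_eq (B - g) (n := 2) (by norm_num)
    obtain ⟨Q, hQ⟩ := IsAlgClosed.exists_pow_nat_eq (B' - g) (n := 2) (by norm_num)
    have hq0 : q ≠ 0 := by intro h0; rw [h0] at hq; simp at hq; exact hgB hq.symm
    have hQ0 : Q ≠ 0 := by intro h0; rw [h0] at hQ; simp at hQ; exact hgB' hQ.symm
    have h00 := Matrix.ext_iff.2 (H g p P q Q hp hP hq hQ) 0 0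
    simp only [Matrix.mul_apply, Fin.sum_univ_two, Matrix.cons_val', Matrix.cons_val_zero,
      Matrix.cons_val_one, Matrix.head_cons, Matrix.empty_val', Matrix.cons_val_fin_one,
      Matrix.head_fin_const, Matrix.of_apply] at h00
    have ha : a = p ^ 2 + g := by rw [hp]; ring
    have hA : A = P ^ 2 + g := by rw [hP]; ring
    have hB : B = q ^ 2 + g := by rw [hq]; ring
    have hB' : B' = Q ^ 2 + g := by rw [hQ]; ring
    subst ha hA hB hB'
    field_simp at h00
    have key : (ubt - u) * (ut * ub) = (Q ^ 2 - p ^ 2) * ub - ut * (q ^ 2 - P ^ 2) := by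
      have h' : (Q * q * u) * ((ubt - u) * (ut * ub)) =
          (Q * q * u) * ((Q ^ 2 - p ^ 2) * ub - ut * (q ^ 2 - P ^ 2)) := by
        linear_combination (-(Q * q * u)) * h00
      exact mul_left_cancel₀ (mul_ne_zero (mul_ne_zero hQ0 hq0) hu) h'
    field_simp
    linear_combination key
  · intro h g p P q Q hp hP hq hQ
    have ha : a = p ^ 2 + g := by rw [hp]; ring
    have hA : A = P ^ 2 + g := by rw [hP]; ring
    have hB : B = q ^ 2 + g := by rw [hq]; ring
    have hB' : B' = Q ^ 2 + g := by rw [hQ]; ring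
    subst ha hA hB hB'
    field_simp at h
    ext i j
    fin_cases i <;> fin_cases j <;>
      simp only [Matrix.mul_apply, Fin.sum_univ_two, Matrix.cons_val', Matrix.cons_val_zero,
        Matrix.cons_val_one, Matrix.head_cons, Matrix.empty_val', Matrix.cons_val_fin_one,
        Matrix.head_fin_const, Matrix.of_apply, Fin.zero_eta, Fin.mk_one] <;> field_simp <;> ring_nf
    · linear_combination (-(Q * q)) * h
    · linear_combination (Q * p) * h
    · linear_combination (-(P * q)) * h
    · linear_combination (P * p) * h
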